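/- arXiv:2312.00503 — 2 statements merged into one kernel-verified Lean document; each statement's English description precedes it below -/
import Mathlib

section
/- Let k be a positive integer and let T be a tree on n ≥ 2k vertices. Then there exist sets V_A, V_B with V_A ∪ V_B = V(T) such that the induced subgraphs T[V_A] and T[V_B] are trees, |V_A ∩ V_B| ≤ 1, and k ≤ |V_A| < 2k. -/
open SimpleGraph

section aux

variable {V : Type*}

lemma aux_induce_acyclic {T : SimpleGraph V} (h : T.IsAcyclic) (s : Set V) :
    (T.induce s).IsAcyclic := by
  intro v c hc
  let f : T.induce s ↪g T := Embedding.induce s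
  exact h _ (hc.map (f := f.toHom) f.injective)

lemma aux_singleton_connected (T : SimpleGraph V) (v : V) :
    (T.induce ({v} : Set V)).Connected := by
  rw [connected_iff]
  refine ⟨fun a b => ?_, ⟨⟨v, rfl⟩⟩⟩
  have : a = b := by
    ext
    rw [a.2, b.2]
  exact this ▸ Reachable.refl _

/-- From reachability in an induced subgraph, extract a walk in the ambient graph
whose support stays in the set. -/
lemma aux_walk_of_reachable {T : SimpleGraph V} {s : Set V} {x y : V}
    (hx : x ∈ s) (hy : y ∈ s)
    (h : (T.induce s).Reachable ⟨x, hx⟩ ⟨y, hy⟩) :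
    ∃ p : T.Walk x y, ∀ z ∈ p.support, z ∈ s := by
  obtain ⟨q⟩ := h
  refine ⟨q.map (Embedding.induce s).toHom, ?_⟩
  intro z hz
  replace hz : z ∈ (q.map (Embedding.induce s).toHom).support := hz
  rw [Walk.support_map, List.mem_map] at hz
  obtain ⟨⟨z', hz'⟩, _, rfl⟩ := hz
  exact hz'

/-- The key recursion: given a connected set `S` with connected "outside plus
attachment vertex" and `k ≤ |S|`, we can find such a pair with `|A| < 2k`. -/
lemma aux_key {V : Type*} [Fintype V] [DecidableEq V] (T : SimpleGraph V)
    (k : ℕ) (hk : 0 < k) :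
    ∀ (n : ℕ) (S : Finset V) (v : V), S.card ≤ n → v ∈ S →
      (T.induce (S : Set V)).Connected →
      (T.induce ((S : Set V)ᶜ ∪ {v})).Connected → k ≤ S.card →
      ∃ (A : Finset V) (w : V), w ∈ A ∧ (T.induce (A : Set V)).Connected ∧
        (T.induce ((A : Set V)ᶜ ∪ {w})).Connected ∧ k ≤ A.card ∧ A.card < 2 * k := by
  intro n
  induction n with
  | zero =>
    intro S v hSn _ _ _ hkS
    omega
  | succ n ih =>
    intro S v hSn hvS hSconn hScconn hkS
    by_cases hbig : S.card < 2 * k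
    · exact ⟨S, v, hvS, hSconn, hScconn, hkS, hbig⟩
    push_neg at hbig
    obtain ⟨u, huS', huv⟩ : ∃ u ∈ S, u ≠ v := by
      obtain ⟨a, ha, b, hb, hne⟩ := Finset.one_lt_card.mp (show 1 < S.card by omega)
      rcases eq_or_ne a v with rfl | h
      · exact ⟨b, hb, fun hbv => hne hbv.symm⟩
      · exact ⟨a, ha, h⟩
    classical
    set S' := S.erase v with hS'def
    have huS'' : u ∈ S' := Finset.mem_erase.mpr ⟨huv, huS'⟩
    set C : Finset V :=
      S'.filter (fun x => ∃ p : T.Walk u x, ∀ y ∈ p.support, y ∈ S') with hCdef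
    have hCsub : C ⊆ S' := Finset.filter_subset _ _
    have hCS : ∀ x ∈ C, x ∈ S := fun x hx => Finset.mem_of_mem_erase (hCsub hx)
    have hCv : ∀ x ∈ C, x ≠ v := fun x hx => (Finset.mem_erase.mp (hCsub hx)).1
    have hvC : v ∉ C := fun h => hCv v h rfl
    have huC : u ∈ C := by
      refine Finset.mem_filter.mpr ⟨huS'', Walk.nil, ?_⟩
      intro y hy
      simp only [Walk.support_nil, List.mem_singleton] at hy
      exact hy ▸ huS''
    -- C is closed under adjacency within S'
    have hclosure : ∀ x ∈ C, ∀ y ∈ S', T.Adj x y → y ∈ C := by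
      intro x hx y hy hxy
      obtain ⟨hxS', p, hp⟩ := Finset.mem_filter.mp hx
      refine Finset.mem_filter.mpr ⟨hy, p.concat hxy, ?_⟩
      intro z hz
      rw [Walk.support_concat, List.mem_append] at hz
      rcases hz with hz | hz
      · exact hp z hz
      · simp only [List.mem_singleton] at hz
        exact hz ▸ hy
    -- C induces a connected graph
    have hCconn : (T.induce (C : Set V)).Connected := by
      refine induce_connected_of_patches u huC ?_
      intro x hx
      obtain ⟨hxS', p, hp⟩ := Finset.mem_filter.mp hx
      refine ⟨{y | y ∈ p.support}, ?_, p.start_mem_support, p.end_mem_support, ?_⟩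
      · intro y hy
        refine Finset.mem_filter.mpr ⟨hp y hy, p.takeUntil y hy, ?_⟩
        intro z hz
        exact hp z (p.support_takeUntil_subset hy hz)
      · exact (p.connected_induce_support).preconnected _ _
    -- every vertex of S can reach v by a walk in S
    have hwalk : ∀ x ∈ S, ∃ p : T.Walk x v, ∀ y ∈ p.support, y ∈ S := by
      intro x hx
      exact aux_walk_of_reachable hx hvS (hSconn.preconnected _ _)
    -- some vertex of C is adjacent to v
    have claimA : ∀ (x y : V) (p : T.Walk x y), y = v → x ∈ C →
        (∀ z ∈ p.support, z ∈ S) → ∃ c ∈ C, T.Adj c v := by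
      intro x y p
      induction p with
      | nil => rintro rfl hxC _; exact absurd hxC hvC
      | @cons a b y' h q ihq =>
        intro heq haC hsupp
        rcases eq_or_ne b v with hbv | hbv
        · exact ⟨a, haC, hbv ▸ h⟩
        · have hbS : b ∈ S := hsupp b (by simp)
          have hbC : b ∈ C := hclosure a haC b (Finset.mem_erase.mpr ⟨hbv, hbS⟩) h
          exact ihq heq hbC (fun z hz => hsupp z (by simp [hz]))
    obtain ⟨c, hcC, hcv⟩ : ∃ c ∈ C, T.Adj c v := by
      obtain ⟨p, hp⟩ := hwalk u huS'
      exact claimA u v p rfl huC hp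
    -- vertices outside C can reach v avoiding C
    have claimB : ∀ (x y : V) (p : T.Walk x y), y = v → x ∈ S → x ∉ C →
        (∀ z ∈ p.support, z ∈ S) →
        ∃ q : T.Walk x v, ∀ z ∈ q.support, z ∈ S ∧ z ∉ C := by
      intro x y p
      induction p with
      | nil =>
        intro heq _ _ _
        exact ⟨(Walk.nil : T.Walk v v).copy heq.symm rfl, by simp [hvS, hvC]⟩
      | @cons a b y' h q ihq =>
        intro heq haS haC hsupp
        rcases eq_or_ne a v with hav | hav
        · exact ⟨(Walk.nil : T.Walk v v).copy hav.symm rfl, by simp [hvS, hvC]⟩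
        · have hbS : b ∈ S := hsupp b (by simp)
          have hbC : b ∉ C := by
            intro hbC
            exact haC (hclosure b hbC a (Finset.mem_erase.mpr ⟨hav, haS⟩) h.symm)
          obtain ⟨q', hq'⟩ := ihq heq hbS hbC (fun z hz => hsupp z (by simp [hz]))
          refine ⟨Walk.cons h q', ?_⟩
          intro z hz
          rw [Walk.support_cons, List.mem_cons] at hz
          rcases hz with rfl | hz
          · exact ⟨haS, haC⟩
          · exact hq' z hz
    have hvSC : v ∈ S \ C := Finset.mem_sdiff.mpr ⟨hvS, hvC⟩
    -- S \ C induces a connected graph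
    have hSCconn : (T.induce ((S \ C : Finset V) : Set V)).Connected := by
      refine induce_connected_of_patches v (by exact_mod_cast hvSC) ?_
      intro x hx
      have hx' : x ∈ S \ C := by exact_mod_cast hx
      obtain ⟨hxS, hxC⟩ := Finset.mem_sdiff.mp hx'
      obtain ⟨p, hp⟩ := hwalk x hxS
      obtain ⟨q, hq⟩ := claimB x v p rfl hxS hxC hp
      refine ⟨{y | y ∈ q.support}, ?_, q.end_mem_support, q.start_mem_support, ?_⟩
      · intro y hy
        have := hq y hy
        exact_mod_cast Finset.mem_sdiff.mpr this
      · exact (q.connected_induce_support).preconnected _ _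
    by_cases hCk : k ≤ C.card
    · -- recurse into C, attachment vertex c
      have hCcard : C.card ≤ n := by
        have h1 : C.card ≤ S'.card := Finset.card_le_card hCsub
        have h2 : S'.card = S.card - 1 := Finset.card_erase_of_mem hvS
        omega
      have hCc : (T.induce ((C : Set V)ᶜ ∪ {c})).Connected := by
        have h1 : (T.induce (((S : Set V)ᶜ ∪ {v}) ∪ ((S \ C : Finset V) : Set V))).Connected := by
          refine induce_union_connected hScconn.preconnected hSCconn.preconnected ⟨v, ?_, by exact_mod_cast hvSC⟩
          exact Or.inr rfl
        have h2 : (T.induce ((((S : Set V)ᶜ ∪ {v}) ∪ ((S \ C : Finset V) : Set V)) ∪ {c})).Connected := by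
          refine connected_induce_union h1.preconnected (aux_singleton_connected T c).preconnected
            (Or.inl (Or.inr rfl)) rfl hcv.symm
        have hset : (((S : Set V)ᶜ ∪ {v}) ∪ ((S \ C : Finset V) : Set V)) ∪ {c}
            = (C : Set V)ᶜ ∪ {c} := by
          ext x
          simp only [Set.mem_union, Set.mem_compl_iff, Set.mem_singleton_iff,
            Finset.coe_sdiff, Set.mem_diff, Finset.mem_coe]
          constructor
          · rintro (((hx | rfl) | ⟨hxS, hxC⟩) | rfl)
            · exact Or.inl (fun h => hx (hCS x h))
            · exact Or.inl hvC
            · exact Or.inl hxC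
            · exact Or.inr rfl
          · rintro (hxC | rfl)
            · by_cases hxS : x ∈ S
              · exact Or.inl (Or.inr ⟨hxS, hxC⟩)
              · exact Or.inl (Or.inl (Or.inl hxS))
            · exact Or.inr rfl
        rw [← hset]
        exact h2
      exact ih C c hCcard hcC hCconn hCc hCk
    · -- recurse into S \ C, attachment vertex v
      push_neg at hCk
      have hCpos : 1 ≤ C.card := Finset.card_pos.mpr ⟨u, huC⟩
      have hCsubS : C ⊆ S := fun x hx => hCS x hx
      have hcard : (S \ C).card = S.card - C.card := Finset.card_sdiff_of_subset hCsubS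
      have hSCn : (S \ C).card ≤ n := by omega
      have hSCk : k ≤ (S \ C).card := by omega
      have hSCc : (T.induce ((((S \ C : Finset V) : Set V))ᶜ ∪ {v})).Connected := by
        have h2 : (T.induce (((S : Set V)ᶜ ∪ {v}) ∪ (C : Set V))).Connected := by
          refine connected_induce_union hScconn.preconnected hCconn.preconnected (Or.inr rfl) hcC hcv.symm
        have hset : ((S : Set V)ᶜ ∪ {v}) ∪ (C : Set V)
            = ((S \ C : Finset V) : Set V)ᶜ ∪ {v} := by
          ext x
          simp only [Set.mem_union, Set.mem_compl_iff, Set.mem_singleton_iff,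
            Finset.coe_sdiff, Set.mem_diff, Finset.mem_coe]
          constructor
          · rintro ((hx | rfl) | hxC)
            · exact Or.inl (fun h => hx h.1)
            · exact Or.inr rfl
            · exact Or.inl (fun h => h.2 hxC)
          · rintro (hx | rfl)
            · by_cases hxS : x ∈ S
              · by_cases hxC : x ∈ C
                · exact Or.inr hxC
                · exact absurd ⟨hxS, hxC⟩ hx
              · exact Or.inl (Or.inl hxS)
            · exact Or.inl (Or.inr rfl)
        rw [← hset]
        exact h2
      exact ih (S \ C) v hSCn hvSC hSCconn hSCc hSCk

end aux

/-- Small subtree lemma: a tree on `n ≥ 2k` vertices can be covered by two sets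
`A`, `B` inducing trees, overlapping in at most one vertex, with `k ≤ |A| < 2k`. -/
theorem stmt_0 {V : Type*} [Fintype V] [DecidableEq V] (T : SimpleGraph V)
    (hT : T.IsTree) (k : ℕ) (hk : 0 < k) (hn : 2 * k ≤ Fintype.card V) :
    ∃ A B : Finset V, A ∪ B = Finset.univ ∧
      (T.induce (A : Set V)).IsTree ∧ (T.induce (B : Set V)).IsTree ∧
      (A ∩ B).card ≤ 1 ∧ k ≤ A.card ∧ A.card < 2 * k := by
  classical
  haveI : Nonempty V := Fintype.card_pos_iff.mp (by omega)
  obtain ⟨v₀⟩ := ‹Nonempty V›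
  have huniv : (T.induce ((Finset.univ : Finset V) : Set V)).Connected := by
    rw [Finset.coe_univ]
    exact Connected.map (induceUnivIso T).symm.toHom
      (induceUnivIso T).symm.toEquiv.surjective hT.isConnected
  have hcompl : (T.induce ((((Finset.univ : Finset V) : Set V))ᶜ ∪ {v₀})).Connected := by
    have hset : (((Finset.univ : Finset V) : Set V))ᶜ ∪ {v₀} = ({v₀} : Set V) := by
      simp
    rw [hset]
    exact aux_singleton_connected T v₀
  obtain ⟨A, w, hwA, hAconn, hAcc, hkA, hA2k⟩ :=
    aux_key T k hk (Fintype.card V) Finset.univ v₀ (by simp) (Finset.mem_univ _)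
      huniv hcompl (by simp; omega)
  refine ⟨A, Aᶜ ∪ {w}, ?_, ⟨hAconn, aux_induce_acyclic hT.IsAcyclic _⟩, ?_, ?_, hkA, hA2k⟩
  · ext x
    simp only [Finset.mem_union, Finset.mem_compl, Finset.mem_singleton, Finset.mem_univ,
      iff_true]
    by_cases hx : x ∈ A
    · exact Or.inl hx
    · exact Or.inr (Or.inl hx)
  · have hcoe : ((Aᶜ ∪ {w} : Finset V) : Set V) = (A : Set V)ᶜ ∪ {w} := by
      simp [Finset.coe_union, Finset.coe_compl]
    rw [hcoe]
    exact ⟨hAcc, aux_induce_acyclic hT.IsAcyclic _⟩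
  · have hsub : A ∩ (Aᶜ ∪ {w}) ⊆ {w} := by
      intro x hx
      rw [Finset.mem_inter, Finset.mem_union] at hx
      rcases hx.2 with h | h
      · exact absurd hx.1 (Finset.mem_compl.mp h)
      · exact h
    calc (A ∩ (Aᶜ ∪ {w})).card ≤ ({w} : Finset V).card := Finset.card_le_card hsub
      _ = 1 := Finset.card_singleton w
end

section
/- Let d, m be positive integers and let G be a graph with disjoint vertex subsets U, W satisfying: (i) |N_G(X) ∩ W| ≥ d|X| for all X ⊆ U with 1 ≤ |X| ≤ m; (ii) there is at least one edge between X and Y for all X ⊆ U, Y ⊆ W with |X| = |Y| ≥ m; (iii) |N_G(w) ∩ U| ≥ m for all w ∈ W. Then for every function k : U → {1,…,d} with ∑_{u∈U} k(u) = |W|, the set W can be partitioned into pairwise disjoint subsets {W_u}_{u∈U} with |W_u| = k(u) and W_u ⊆ N_G(u) ∩ W. -/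
/-- Star matching lemma: under the expansion conditions (i)–(iii) between disjoint
sets `U`, `W`, for every `k : U → {1,…,d}` with `∑ k(u) = |W|`, the set `W` can be
partitioned into stars `{W_u}` with `|W_u| = k(u)` and `W_u ⊆ N_G(u) ∩ W`. -/
theorem stmt_8 {V : Type*} [Fintype V] [DecidableEq V] (G : SimpleGraph V)
    [DecidableRel G.Adj] (d m : ℕ) (hd : 0 < d) (hm : 0 < m)
    (U W : Finset V) (hUW : Disjoint U W)
    (h1 : ∀ X ⊆ U, 1 ≤ X.card → X.card ≤ m →
      d * X.card ≤ (W.filter fun w => ∃ x ∈ X, G.Adj x w).card)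
    (h2 : ∀ X ⊆ U, ∀ Y ⊆ W, X.card = Y.card → m ≤ X.card →
      ∃ x ∈ X, ∃ y ∈ Y, G.Adj x y)
    (h3 : ∀ w ∈ W, m ≤ (U.filter fun u => G.Adj u w).card)
    (k : V → ℕ) (hk : ∀ u ∈ U, 1 ≤ k u ∧ k u ≤ d)
    (hsum : ∑ u ∈ U, k u = W.card) :
    ∃ Wu : V → Finset V,
      (∀ u ∈ U, (Wu u).card = k u ∧ Wu u ⊆ W.filter fun w => G.Adj u w) ∧
      (∀ u ∈ U, ∀ u' ∈ U, u ≠ u' → Disjoint (Wu u) (Wu u')) ∧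
      W = U.biUnion Wu := by
  classical
  -- key counting lemma: for nonempty X ⊆ U, ∑_{u ∈ X} k u ≤ |N(X) ∩ W|
  have key : ∀ X ⊆ U, X.Nonempty →
      ∑ u ∈ X, k u ≤ (W.filter fun w => ∃ x ∈ X, G.Adj x w).card := by
    intro X hXU hXne
    by_cases hXm : X.card ≤ m
    · calc ∑ u ∈ X, k u ≤ ∑ _u ∈ X, d := Finset.sum_le_sum (fun u hu => (hk u (hXU hu)).2)
        _ = d * X.card := by rw [Finset.sum_const, smul_eq_mul, mul_comm]
        _ ≤ _ := h1 X hXU (Finset.card_pos.mpr hXne) hXm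
    · push_neg at hXm
      set N := W.filter (fun w => ∃ x ∈ X, G.Adj x w) with hN
      set Y := W.filter (fun w => ¬ ∃ x ∈ X, G.Adj x w) with hY
      have hYW : Y ⊆ W := Finset.filter_subset _ _
      have hYsmall : Y.card < m := by
        by_contra hYm
        push_neg at hYm
        obtain ⟨X', hX'X, hX'card⟩ := Finset.exists_subset_card_eq (s := X) (n := m) (le_of_lt hXm)
        obtain ⟨Y', hY'Y, hY'card⟩ := Finset.exists_subset_card_eq (s := Y) (n := m) hYm
        obtain ⟨x, hx, y, hy, hadj⟩ := h2 X' (hX'X.trans hXU) Y' (hY'Y.trans hYW)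
          (by rw [hX'card, hY'card]) (le_of_eq hX'card.symm)
        have := hY'Y hy
        rw [hY, Finset.mem_filter] at this
        exact this.2 ⟨x, hX'X hx, hadj⟩
      have hYle : Y.card ≤ ∑ u ∈ U \ X, k u := by
        rcases Finset.eq_empty_or_nonempty Y with h | ⟨w, hw⟩
        · simp [h]
        · have hwW : w ∈ W := hYW hw
          have hsub : U.filter (fun u => G.Adj u w) ⊆ U \ X := by
            intro u hu
            rw [Finset.mem_filter] at hu
            rw [Finset.mem_sdiff]
            refine ⟨hu.1, fun huX => ?_⟩
            have := Finset.mem_filter.mp hw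
            exact this.2 ⟨u, huX, hu.2⟩
          have hm1 : m ≤ (U \ X).card := le_trans (h3 w hwW) (Finset.card_le_card hsub)
          calc Y.card ≤ m := le_of_lt hYsmall
            _ ≤ (U \ X).card := hm1
            _ = ∑ _u ∈ U \ X, 1 := by simp
            _ ≤ ∑ u ∈ U \ X, k u := Finset.sum_le_sum
                (fun u hu => (hk u (Finset.mem_sdiff.mp hu).1).1)
      have hsplit : ∑ u ∈ U \ X, k u + ∑ u ∈ X, k u = W.card := by
        rw [Finset.sum_sdiff hXU, hsum]
      have hNY : N.card + Y.card = W.card := Finset.card_filter_add_card_filter_not _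
      omega
  -- Hall's theorem setup
  set ι := Σ u : {x // x ∈ U}, Fin (k u.1) with hι
  set t : ι → Finset V := fun p => W.filter (fun w => G.Adj p.1.1 w) with ht
  have hall : ∀ s : Finset ι, s.card ≤ (s.biUnion t).card := by
    intro s
    rcases Finset.eq_empty_or_nonempty s with h | hs
    · simp [h]
    set X := s.image (fun p : ι => (p.1 : V)) with hX
    clear_value X
    have hXU : X ⊆ U := by
      intro x hx
      rw [hX, Finset.mem_image] at hx
      obtain ⟨p, _, rfl⟩ := hx
      exact p.1.2
    have hXne : X.Nonempty := by rw [hX]; exact hs.image _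
    have hcard : s.card ≤ ∑ u ∈ X, k u := by
      rw [Finset.card_eq_sum_card_fiberwise (f := fun p : ι => (p.1 : V)) (t := X)
        (fun p hp => by rw [hX]; exact Finset.mem_image_of_mem _ hp)]
      refine Finset.sum_le_sum (fun u hu => ?_)
      have : (s.filter fun p : ι => (p.1 : V) = u).card ≤ (Finset.range (k u)).card := by
        apply Finset.card_le_card_of_injOn (fun p => (p.2 : ℕ))
        · intro p hp
          rw [Finset.mem_coe, Finset.mem_filter] at hp
          rw [Finset.mem_coe, Finset.mem_range]
          exact lt_of_lt_of_eq p.2.2 (congrArg k hp.2)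
        · intro p hp q hq hpq
          rw [Finset.mem_coe, Finset.mem_filter] at hp hq
          obtain ⟨⟨pu, hpu⟩, pi⟩ := p
          obtain ⟨⟨qu, hqu⟩, qi⟩ := q
          simp only at hp hq
          have h1' : pu = u := hp.2
          have h2' : qu = u := hq.2
          subst h1'; subst h2'
          simp only [Sigma.mk.inj_iff, heq_eq_eq, Fin.val_inj] at hpq
          cases hpq
          rfl
      simpa using this
    have hsub : (W.filter fun w => ∃ x ∈ X, G.Adj x w) ⊆ s.biUnion t := by
      intro w hw
      rw [Finset.mem_filter] at hw
      obtain ⟨hwW, x, hx, hadj⟩ := hw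
      rw [hX, Finset.mem_image] at hx
      obtain ⟨p, hp, hpx⟩ := hx
      rw [Finset.mem_biUnion]
      exact ⟨p, hp, Finset.mem_filter.mpr ⟨hwW, hpx ▸ hadj⟩⟩
    calc s.card ≤ ∑ u ∈ X, k u := hcard
      _ ≤ (W.filter fun w => ∃ x ∈ X, G.Adj x w).card := key X hXU hXne
      _ ≤ (s.biUnion t).card := Finset.card_le_card hsub
  obtain ⟨f, hfinj, hft⟩ := (Finset.all_card_le_biUnion_card_iff_exists_injective t).mp hall
  set Wu : V → Finset V := fun u =>
    if h : u ∈ U then Finset.univ.image (fun i : Fin (k u) => f ⟨⟨u, h⟩, i⟩) else ∅ with hWu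
  have hWucard : ∀ u ∈ U, (Wu u).card = k u := by
    intro u hu
    have hinj : Function.Injective (fun i : Fin (k u) => f ⟨⟨u, hu⟩, i⟩) := by
      intro i j hij
      have h' := hfinj hij
      have h2 := congrArg (fun p : ι => (p.2 : ℕ)) h'
      exact Fin.ext (by simpa using h2)
    rw [hWu]
    simp only [dif_pos hu]
    rw [Finset.card_image_of_injective _ hinj]
    simp
  have hWusub : ∀ u ∈ U, Wu u ⊆ W.filter fun w => G.Adj u w := by
    intro u hu w hw
    rw [hWu] at hw
    simp only [dif_pos hu, Finset.mem_image] at hw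
    obtain ⟨i, _, rfl⟩ := hw
    exact hft ⟨⟨u, hu⟩, i⟩
  have hWudisj : ∀ u ∈ U, ∀ u' ∈ U, u ≠ u' → Disjoint (Wu u) (Wu u') := by
    intro u hu u' hu' hne
    rw [Finset.disjoint_left]
    intro w hw hw'
    rw [hWu] at hw hw'
    simp only [dif_pos hu, Finset.mem_image] at hw
    simp only [dif_pos hu', Finset.mem_image] at hw'
    obtain ⟨i, _, hi⟩ := hw
    obtain ⟨j, _, hj⟩ := hw'
    have := hfinj (hi.trans hj.symm)
    exact hne (congrArg (fun p : ι => (p.1 : V)) this)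
  refine ⟨Wu, fun u hu => ⟨hWucard u hu, hWusub u hu⟩, hWudisj, ?_⟩
  have hsub : U.biUnion Wu ⊆ W := by
    intro w hw
    rw [Finset.mem_biUnion] at hw
    obtain ⟨u, hu, hwu⟩ := hw
    exact (Finset.mem_filter.mp (hWusub u hu hwu)).1
  have hcard : W.card ≤ (U.biUnion Wu).card := by
    rw [Finset.card_biUnion (fun u hu u' hu' hne => hWudisj u hu u' hu' hne)]
    rw [← hsum]
    exact le_of_eq (Finset.sum_congr rfl (fun u hu => (hWucard u hu).symm))
  exact (Finset.eq_of_subset_of_card_le hsub hcard).symm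
end
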